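/- Consider nonnegative continuously differentiable functions X₁, X₂ : [t_s, ∞) → ℝ satisfying Ẋ₁ ≤ −λ₁X₁ + (g₁/φ_b)X₂ + U₁ and Ẋ₂ ≤ −λ₂φ_b·X₂ + g₂X₁ + U₂, with constants λ₁, λ₂, g₁, g₂, φ_b > 0 and bounded nonnegative inputs U₁, U₂. If 4·(g₁/λ₁)·(g₂/λ₂) ≤ φ_b², then X₁ and X₂ remain uniformly bounded on [t_s, ∞). -/

import Mathlib

set_option maxHeartbeats 1600000 in
/-- Small-gain condition: two interconnected scalar comparison systems with
loop-gain condition 4(g₁/lam₁)(g₂/lam₂) ≤ φ_b² have uniformly bounded states. -/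
theorem stmt_7 (X₁ X₂ U₁ U₂ : ℝ → ℝ) (ts lam₁ lam₂ g₁ g₂ φb M : ℝ)
    (hlam₁ : 0 < lam₁) (hlam₂ : 0 < lam₂) (hg₁ : 0 < g₁) (hg₂ : 0 < g₂)
    (hφb : 0 < φb)
    (hX₁nn : ∀ t ≥ ts, 0 ≤ X₁ t) (hX₂nn : ∀ t ≥ ts, 0 ≤ X₂ t)
    (hX₁d : ∀ t ≥ ts, HasDerivAt X₁ (deriv X₁ t) t)
    (hX₂d : ∀ t ≥ ts, HasDerivAt X₂ (deriv X₂ t) t)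
    (hU₁ : ∀ t ≥ ts, 0 ≤ U₁ t ∧ U₁ t ≤ M)
    (hU₂ : ∀ t ≥ ts, 0 ≤ U₂ t ∧ U₂ t ≤ M)
    (hineq₁ : ∀ t ≥ ts, deriv X₁ t ≤ -lam₁ * X₁ t + (g₁ / φb) * X₂ t + U₁ t)
    (hineq₂ : ∀ t ≥ ts, deriv X₂ t ≤ -lam₂ * φb * X₂ t + g₂ * X₁ t + U₂ t)
    (hsg : 4 * (g₁ / lam₁) * (g₂ / lam₂) ≤ φb ^ 2) :
    ∃ B : ℝ, ∀ t ≥ ts, X₁ t ≤ B ∧ X₂ t ≤ B := by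
  have hM : 0 ≤ M := le_trans (hU₁ ts le_rfl).1 (hU₁ ts le_rfl).2
  set c : ℝ := lam₁ / (2 * g₂) with hc
  have hcpos : 0 < c := by positivity
  set α : ℝ := min (lam₁ / 2) (lam₂ * φb / 2) with hα
  have hαpos : 0 < α := lt_min (by positivity) (by positivity)
  set Cst : ℝ := (1 + c) * M with hCst
  set V : ℝ → ℝ := fun t => X₁ t + c * X₂ t with hV
  have hVd : ∀ t ≥ ts, HasDerivAt V (deriv X₁ t + c * deriv X₂ t) t := fun t ht =>
    (hX₁d t ht).add ((hX₂d t ht).const_mul c)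
  -- small gain condition cleared of denominators
  have hsg' : 4 * g₁ * g₂ ≤ lam₁ * lam₂ * φb ^ 2 := by
    have h := mul_le_mul_of_nonneg_left hsg (le_of_lt (mul_pos hlam₁ hlam₂))
    have h1 : lam₁ * lam₂ * (4 * (g₁ / lam₁) * (g₂ / lam₂)) = 4 * g₁ * g₂ := by
      field_simp
    rw [h1] at h
    linarith
  have hcg : c * g₂ = lam₁ / 2 := by rw [hc]; field_simp
  have hdiv : g₁ / φb ≤ c * (lam₂ * φb) / 2 := by
    have h2 : c * (lam₂ * φb) / 2 = lam₁ * lam₂ * φb / (4 * g₂) := by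
      rw [hc]; field_simp; ring
    rw [h2, div_le_div_iff₀ hφb (by positivity)]
    nlinarith [hsg']
  have key : ∀ t ≥ ts, deriv X₁ t + c * deriv X₂ t ≤ -α * V t + Cst := by
    intro t ht
    have h1 := hineq₁ t ht
    have h2 := hineq₂ t ht
    have hx1 := hX₁nn t ht
    have hx2 := hX₂nn t ht
    have hu1 := hU₁ t ht
    have hu2 := hU₂ t ht
    have hα1 : α ≤ lam₁ / 2 := min_le_left _ _
    have hα2 : α ≤ lam₂ * φb / 2 := min_le_right _ _
    have hb1 : (-lam₁ + c * g₂ + α) * X₁ t ≤ 0 := by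
      apply mul_nonpos_of_nonpos_of_nonneg _ hx1
      linarith [hcg]
    have hb2 : (g₁ / φb - c * (lam₂ * φb) + α * c) * X₂ t ≤ 0 := by
      apply mul_nonpos_of_nonpos_of_nonneg _ hx2
      have : α * c ≤ (lam₂ * φb / 2) * c := mul_le_mul_of_nonneg_right hα2 hcpos.le
      nlinarith [hdiv]
    have hu : U₁ t + c * U₂ t ≤ Cst := by
      have : c * U₂ t ≤ c * M := mul_le_mul_of_nonneg_left hu2.2 hcpos.le
      rw [hCst]; nlinarith [hu1.2]
    have hmul2 : c * deriv X₂ t ≤ c * (-lam₂ * φb * X₂ t + g₂ * X₁ t + U₂ t) :=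
      mul_le_mul_of_nonneg_left h2 hcpos.le
    simp only [hV]
    linarith [hb1, hb2, hu, h1, hmul2]
  -- Gronwall via monotonicity of G t = exp(α t) * (V t - D)
  set D : ℝ := Cst / α with hD
  have hαD : α * D = Cst := by rw [hD]; field_simp
  set G : ℝ → ℝ := fun t => Real.exp (α * t) * (V t - D) with hG
  have hGd : ∀ t ≥ ts, HasDerivAt G
      (α * Real.exp (α * t) * (V t - D)
        + Real.exp (α * t) * (deriv X₁ t + c * deriv X₂ t)) t := by
    intro t ht
    have he : HasDerivAt (fun t => Real.exp (α * t)) (α * Real.exp (α * t)) t := by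
      simpa [mul_comm] using ((hasDerivAt_id t).const_mul α).exp
    have hv : HasDerivAt (fun t => V t - D) (deriv X₁ t + c * deriv X₂ t) t :=
      (hVd t ht).sub_const _
    exact he.mul hv
  have hanti : AntitoneOn G (Set.Ici ts) := by
    apply antitoneOn_of_deriv_nonpos (convex_Ici ts)
    · intro t ht
      exact ((hGd t ht).continuousAt).continuousWithinAt
    · intro t ht
      rw [interior_Ici] at ht
      exact ((hGd t (le_of_lt ht)).differentiableAt).differentiableWithinAt
    · intro t ht
      rw [interior_Ici] at ht
      rw [(hGd t (le_of_lt ht)).deriv]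
      have hk := key t (le_of_lt ht)
      have hep := Real.exp_pos (α * t)
      have h5 : Real.exp (α * t) * (α * D) = Real.exp (α * t) * Cst := by rw [hαD]
      nlinarith [mul_le_mul_of_nonneg_left hk hep.le, h5]
  have hBv : ∀ t ≥ ts, V t ≤ max (V ts) D := by
    intro t ht
    have hGt : G t ≤ G ts := hanti Set.self_mem_Ici ht ht
    simp only [hG] at hGt
    have hept := Real.exp_pos (α * t)
    have heps := Real.exp_pos (α * ts)
    rcases le_or_gt (V ts) D with h | h
    · have h0 : Real.exp (α * ts) * (V ts - D) ≤ 0 :=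
        mul_nonpos_of_nonneg_of_nonpos heps.le (by linarith)
      have h1 : Real.exp (α * t) * (V t - D) ≤ 0 := le_trans hGt h0
      have h2 : V t - D ≤ 0 := by
        by_contra hp
        push_neg at hp
        exact absurd h1 (not_le.mpr (mul_pos hept hp))
      exact le_max_of_le_right (by linarith)
    · have hexp : Real.exp (α * ts) ≤ Real.exp (α * t) := by
        apply Real.exp_le_exp.mpr
        have := mul_le_mul_of_nonneg_left ht hαpos.le
        linarith
      have h2 : Real.exp (α * ts) * (V ts - D)
          ≤ Real.exp (α * t) * (V ts - D) :=
        mul_le_mul_of_nonneg_right hexp (by linarith)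
      have h3 : Real.exp (α * t) * (V t - D)
          ≤ Real.exp (α * t) * (V ts - D) := le_trans hGt h2
      have h4 : V t - D ≤ V ts - D :=
        le_of_mul_le_mul_left h3 hept
      exact le_max_of_le_left (by linarith)
  -- conclude
  refine ⟨max (max (V ts) D) (max (V ts) D / c), fun t ht => ?_⟩
  have hv := hBv t ht
  have hx1 := hX₁nn t ht
  have hx2 := hX₂nn t ht
  constructor
  · apply le_max_of_le_left
    have : X₁ t ≤ V t := by simp only [hV]; nlinarith
    linarith
  · apply le_max_of_le_right
    rw [le_div_iff₀ hcpos]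
    have : X₂ t * c ≤ V t := by simp only [hV]; nlinarith
    linarith
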